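/- Let d ≥ 1, C_g > 0, λ ≥ C_g², T ≥ 1, and let g_1, …, g_T ∈ ℝ^d satisfy ‖g_t‖₂ ≤ C_g for all 1 ≤ t ≤ T. For 1 ≤ t ≤ T define Σ_t = λI + Σ_{i=1}^{t-1} g_i g_iᵀ and u_t = ‖g_t‖_{Σ_t^{-1}}. Then Σ_{t=1}^T u_t² ≤ 2d · log(1 + T·C_g² / (d·λ)). -/

import Mathlib

open Matrix Finset

private lemma log_lb {x : ℝ} (h0 : 0 ≤ x) (h1 : x ≤ 1) : x ≤ 2 * Real.log (1 + x) := by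
  have hx1 : (0:ℝ) < 1 + x := by linarith
  have h := Real.log_le_sub_one_of_pos (x := (1+x)⁻¹) (by positivity)
  rw [Real.log_inv] at h
  have h2 : x / (1+x) ≤ Real.log (1+x) := by
    have he : (1+x)⁻¹ - 1 = -(x/(1+x)) := by field_simp; ring
    rw [he] at h
    linarith
  have h3 : x/2 ≤ x/(1+x) := by
    rw [div_le_div_iff₀ (by norm_num) hx1]
    nlinarith
  linarith

private lemma vmv_psd {d : ℕ} (v : Fin d → ℝ) : (vecMulVec v v).PosSemidef := by
  have hcol : replicateCol Unit v = (replicateRow Unit v)ᴴ := by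
    rw [conjTranspose_replicateRow, star_trivial]
  rw [vecMulVec_eq Unit, hcol]
  exact posSemidef_conjTranspose_mul_self _

/-- Elliptical potential lemma: with `λ ≥ C_g²`, `Σ_t = λI + ∑_{i=1}^{t-1} g_i g_iᵀ`
and `u_t = ‖g_t‖_{Σ_t⁻¹}`, one has `∑_{t=1}^T u_t² ≤ 2 d log(1 + T C_g²/(d λ))`. -/
theorem sum_sq_elliptical_potential
    (d : ℕ) (hd : 1 ≤ d) (Cg lam : ℝ) (hCg : 0 < Cg) (hlam : Cg ^ 2 ≤ lam)
    (T : ℕ) (hT : 1 ≤ T) (g : ℕ → Fin d → ℝ)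
    (hg : ∀ t, 1 ≤ t → t ≤ T → Real.sqrt (g t ⬝ᵥ g t) ≤ Cg)
    (S : ℕ → Matrix (Fin d) (Fin d) ℝ)
    (hS : ∀ t, S t = lam • (1 : Matrix (Fin d) (Fin d) ℝ) +
      ∑ i ∈ Finset.Ico 1 t, vecMulVec (g i) (g i))
    (u : ℕ → ℝ)
    (hu : ∀ t, u t = Real.sqrt (g t ⬝ᵥ ((S t)⁻¹ *ᵥ g t))) :
    ∑ t ∈ Finset.Icc 1 T, u t ^ 2 ≤ 2 * d * Real.log (1 + T * Cg ^ 2 / (d * lam)) := by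
  have hlam0 : 0 < lam := lt_of_lt_of_le (by positivity) hlam
  have hd0 : (0:ℝ) < d := by exact_mod_cast hd
  -- positive semidefiniteness of the sum part
  have hPSD : ∀ t : ℕ, (∑ i ∈ Finset.Ico 1 t, vecMulVec (g i) (g i)).PosSemidef := by
    intro t
    refine Finset.sum_induction _ _ (fun a b ha hb => ha.add hb) ?_ (fun i _ => vmv_psd _)
    exact Matrix.PosSemidef.zero
  -- positive definiteness of S t
  have hpos : ∀ t, (S t).PosDef := by
    intro t
    rw [hS t]
    have h1 : (lam • (1 : Matrix (Fin d) (Fin d) ℝ)).PosDef := by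
      rw [smul_one_eq_diagonal]
      exact posDef_diagonal_iff.mpr fun i => hlam0
    exact h1.add_posSemidef (hPSD t)
  -- u t ^ 2 equals the quadratic form
  have husq : ∀ t, u t ^ 2 = g t ⬝ᵥ ((S t)⁻¹ *ᵥ g t) := by
    intro t
    rw [hu t, Real.sq_sqrt]
    have h := ((hpos t).inv).posSemidef.dotProduct_mulVec_nonneg (g t)
    simpa using h
  -- determinant recursion
  have hrec : ∀ t, 1 ≤ t →
      det (S (t+1)) = det (S t) * (1 + g t ⬝ᵥ ((S t)⁻¹ *ᵥ g t)) := by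
    intro t ht
    have hswap : S (t+1) = S t + replicateCol Unit (g t) * replicateRow Unit (g t) := by
      rw [hS (t+1), hS t, Finset.sum_Ico_succ_top ht, ← add_assoc, vecMulVec_eq Unit]
    rw [hswap, det_add_replicateCol_mul_replicateRow (hpos t).det_pos.ne'.isUnit]
    congr 1
    rw [det_unique, Matrix.mul_assoc, ← replicateCol_mulVec, Matrix.add_apply, Matrix.one_apply_eq,
      replicateRow_mul_replicateCol_apply]
  -- telescoping
  have hdet1 : det (S 1) = lam ^ d := by
    rw [hS 1]
    simp [smul_one_eq_diagonal, det_diagonal]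
  have htel : ∀ n : ℕ, det (S (n+1)) = lam ^ d * ∏ t ∈ Finset.Icc 1 n, (1 + u t ^ 2) := by
    intro n
    induction n with
    | zero => simpa using hdet1
    | succ n ih =>
      rw [hrec (n+1) (by omega), ih, Finset.prod_Icc_succ_top (by omega), husq (n+1)]
      ring
  -- each u t ^ 2 is at most 1
  have hub : ∀ t, 1 ≤ t → t ≤ T → u t ^ 2 ≤ 1 := by
    intro t ht1 ht2
    set A := S t with hAdef
    set y := A⁻¹ *ᵥ g t with hy
    have hAy : A *ᵥ y = g t := by
      rw [hy, mulVec_mulVec, Matrix.mul_nonsing_inv _ (hpos t).det_pos.ne'.isUnit, one_mulVec]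
    have hyy : 0 ≤ y ⬝ᵥ y := Finset.sum_nonneg fun i _ => mul_self_nonneg _
    set c := g t ⬝ᵥ y with hc
    have hq : y ⬝ᵥ (A *ᵥ y) = lam * (y ⬝ᵥ y) + y ⬝ᵥ ((∑ i ∈ Finset.Ico 1 t, vecMulVec (g i) (g i)) *ᵥ y) := by
      rw [hAdef, hS t, add_mulVec, dotProduct_add, smul_mulVec, one_mulVec,
        dotProduct_smul, smul_eq_mul]
    have hpsd : 0 ≤ y ⬝ᵥ ((∑ i ∈ Finset.Ico 1 t, vecMulVec (g i) (g i)) *ᵥ y) := by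
      have h := (hPSD t).dotProduct_mulVec_nonneg y
      simpa using h
    have h1 : lam * (y ⬝ᵥ y) ≤ c := by
      have : y ⬝ᵥ (A *ᵥ y) = c := by rw [hAy, dotProduct_comm]
      rw [this] at hq
      linarith
    have hc0 : 0 ≤ c := le_trans (by positivity) h1
    have hgg : g t ⬝ᵥ g t ≤ Cg ^ 2 := by
      have hnn : 0 ≤ g t ⬝ᵥ g t := Finset.sum_nonneg fun i _ => mul_self_nonneg _
      have := hg t ht1 ht2
      nlinarith [Real.sq_sqrt hnn, Real.sqrt_nonneg (g t ⬝ᵥ g t)]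
    have hCS : c ^ 2 ≤ (g t ⬝ᵥ g t) * (y ⬝ᵥ y) := by
      have h := Finset.sum_mul_sq_le_sq_mul_sq Finset.univ (g t) y
      simpa [hc, dotProduct, pow_two] using h
    have hgg0 : 0 ≤ g t ⬝ᵥ g t := Finset.sum_nonneg fun i _ => mul_self_nonneg _
    have hcc : c ^ 2 ≤ c := by
      nlinarith
    have : c ≤ 1 := by nlinarith
    rw [husq t]
    exact this
  -- trace bound
  have htrace : trace (S (T+1)) ≤ d * lam + T * Cg ^ 2 := by
    rw [hS (T+1), trace_add, trace_smul, trace_one, trace_sum]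
    have htr_vmv : ∀ i : ℕ, trace (vecMulVec (g i) (g i)) = g i ⬝ᵥ g i := by
      intro i
      simp [Matrix.trace, vecMulVec_apply, dotProduct, Matrix.diag]
    have hbd : ∀ i ∈ Finset.Ico 1 (T+1), trace (vecMulVec (g i) (g i)) ≤ Cg ^ 2 := by
      intro i hi
      rw [Finset.mem_Ico] at hi
      rw [htr_vmv i]
      have hnn : 0 ≤ g i ⬝ᵥ g i := Finset.sum_nonneg fun j _ => mul_self_nonneg _
      have := hg i hi.1 (by omega)
      nlinarith [Real.sq_sqrt hnn, Real.sqrt_nonneg (g i ⬝ᵥ g i)]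
    have hsum : ∑ i ∈ Finset.Ico 1 (T+1), trace (vecMulVec (g i) (g i)) ≤ T * Cg ^ 2 := by
      calc ∑ i ∈ Finset.Ico 1 (T+1), trace (vecMulVec (g i) (g i))
          ≤ ∑ i ∈ Finset.Ico 1 (T+1), Cg ^ 2 := Finset.sum_le_sum hbd
        _ = T * Cg ^ 2 := by
            rw [Finset.sum_const, Nat.card_Ico]
            simp [nsmul_eq_mul]
    have : lam • (Fintype.card (Fin d) : ℝ) = d * lam := by
      simp [Fintype.card_fin, mul_comm]
    rw [this]
    linarith
  -- eigenvalues
  have hA : (S (T+1)).IsHermitian := (hpos (T+1)).1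
  set μ : Fin d → ℝ := hA.eigenvalues with hμ
  have hμpos : ∀ i, 0 < μ i := fun i => (hpos (T+1)).eigenvalues_pos i
  have hdetp : (0:ℝ) < det (S (T+1)) := (hpos (T+1)).det_pos
  have hdet_eig : det (S (T+1)) = ∏ i, μ i := by
    simpa using hA.det_eq_prod_eigenvalues
  have htr_eig : trace (S (T+1)) = ∑ i, μ i := by
    simpa using hA.trace_eq_sum_eigenvalues
  -- AM-GM
  have hne : Nonempty (Fin d) := ⟨⟨0, hd⟩⟩
  have hsum_w : ∑ _i : Fin d, ((d:ℝ))⁻¹ = 1 := by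
    rw [Finset.sum_const, Finset.card_univ, Fintype.card_fin, nsmul_eq_mul]
    field_simp
  have hgm := Real.geom_mean_le_arith_mean_weighted Finset.univ (fun _ => (d:ℝ)⁻¹) μ
    (fun _ _ => by positivity) hsum_w (fun i _ => (hμpos i).le)
  have hprod_pow : (∏ i, μ i ^ ((d:ℝ))⁻¹) ^ d = ∏ i, μ i := by
    rw [← Finset.prod_pow]
    refine Finset.prod_congr rfl fun i _ => ?_
    rw [← Real.rpow_natCast (μ i ^ ((d:ℝ))⁻¹) d, ← Real.rpow_mul (hμpos i).le,
      inv_mul_cancel₀ hd0.ne', Real.rpow_one]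
  have hdet_le : det (S (T+1)) ≤ (∑ i, (d:ℝ)⁻¹ * μ i) ^ d := by
    rw [hdet_eig, ← hprod_pow]
    exact pow_le_pow_left₀ (Finset.prod_nonneg fun i _ => Real.rpow_nonneg (hμpos i).le _) hgm d
  have harith : ∑ i, (d:ℝ)⁻¹ * μ i ≤ lam + T * Cg ^ 2 / d := by
    rw [← Finset.mul_sum, ← htr_eig]
    have h := mul_le_mul_of_nonneg_left htrace (inv_nonneg.mpr hd0.le)
    calc (d:ℝ)⁻¹ * trace (S (T+1)) ≤ (d:ℝ)⁻¹ * (d * lam + T * Cg ^ 2) := h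
      _ = lam + T * Cg ^ 2 / d := by field_simp
  have harithpos : 0 < ∑ i, (d:ℝ)⁻¹ * μ i :=
    Finset.sum_pos (fun i _ => mul_pos (by positivity) (hμpos i)) Finset.univ_nonempty
  have hargpos : (0:ℝ) < 1 + T * Cg ^ 2 / (d * lam) := by positivity
  -- key log bound
  have hkey : Real.log (det (S (T+1))) ≤
      d * Real.log lam + d * Real.log (1 + T * Cg ^ 2 / (d * lam)) := by
    have h1 : Real.log (det (S (T+1))) ≤ Real.log ((∑ i, (d:ℝ)⁻¹ * μ i) ^ d) :=
      Real.log_le_log hdetp hdet_le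
    rw [Real.log_pow] at h1
    have h2 : Real.log (∑ i, (d:ℝ)⁻¹ * μ i) ≤ Real.log (lam + T * Cg ^ 2 / d) :=
      Real.log_le_log harithpos harith
    have h3 : lam + T * Cg ^ 2 / d = lam * (1 + T * Cg ^ 2 / (d * lam)) := by
      field_simp
    have h4 : Real.log (lam + T * Cg ^ 2 / d)
        = Real.log lam + Real.log (1 + T * Cg ^ 2 / (d * lam)) := by
      rw [h3, Real.log_mul hlam0.ne' hargpos.ne']
    have h5 : (d:ℝ) * Real.log (∑ i, (d:ℝ)⁻¹ * μ i)
        ≤ (d:ℝ) * (Real.log lam + Real.log (1 + T * Cg ^ 2 / (d * lam))) := by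
      rw [← h4]
      exact mul_le_mul_of_nonneg_left h2 hd0.le
    calc Real.log (det (S (T+1))) ≤ (d:ℝ) * Real.log (∑ i, (d:ℝ)⁻¹ * μ i) := h1
      _ ≤ (d:ℝ) * (Real.log lam + Real.log (1 + T * Cg ^ 2 / (d * lam))) := h5
      _ = d * Real.log lam + d * Real.log (1 + T * Cg ^ 2 / (d * lam)) := by ring
  -- assemble
  have hPpos : ∀ t ∈ Finset.Icc 1 T, (0:ℝ) < 1 + u t ^ 2 := fun t _ => by positivity
  have hstep1 : ∑ t ∈ Finset.Icc 1 T, u t ^ 2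
      ≤ 2 * Real.log (∏ t ∈ Finset.Icc 1 T, (1 + u t ^ 2)) := by
    calc ∑ t ∈ Finset.Icc 1 T, u t ^ 2
        ≤ ∑ t ∈ Finset.Icc 1 T, 2 * Real.log (1 + u t ^ 2) := by
          refine Finset.sum_le_sum fun t ht => ?_
          rw [Finset.mem_Icc] at ht
          exact log_lb (sq_nonneg _) (hub t ht.1 ht.2)
      _ = 2 * ∑ t ∈ Finset.Icc 1 T, Real.log (1 + u t ^ 2) := by rw [Finset.mul_sum]
      _ = 2 * Real.log (∏ t ∈ Finset.Icc 1 T, (1 + u t ^ 2)) := by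
          rw [Real.log_prod fun t ht => (hPpos t ht).ne']
  have hprod_eq : ∏ t ∈ Finset.Icc 1 T, (1 + u t ^ 2) = det (S (T+1)) / lam ^ d := by
    rw [htel T]
    field_simp
  have hlogprod : Real.log (∏ t ∈ Finset.Icc 1 T, (1 + u t ^ 2))
      = Real.log (det (S (T+1))) - d * Real.log lam := by
    rw [hprod_eq, Real.log_div hdetp.ne' (by positivity), Real.log_pow]
  calc ∑ t ∈ Finset.Icc 1 T, u t ^ 2
      ≤ 2 * Real.log (∏ t ∈ Finset.Icc 1 T, (1 + u t ^ 2)) := hstep1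
    _ = 2 * (Real.log (det (S (T+1))) - d * Real.log lam) := by rw [hlogprod]
    _ ≤ 2 * d * Real.log (1 + T * Cg ^ 2 / (d * lam)) := by linarith
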